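/- For all a, b > 0, the Dudley-type integral bound ∫₀^a √(log(1 + b/t)) dt ≤ a·√(log(e(1 + b/a))) holds. -/

import Mathlib

open Real MeasureTheory Set intervalIntegral

private lemma sqrt_le_aux {x L : ℝ} (hx : 0 ≤ x) (hL : 0 < L) :
    Real.sqrt x ≤ (x + L) / (2 * Real.sqrt L) := by
  rw [le_div_iff₀ (by positivity)]
  nlinarith [sq_nonneg (Real.sqrt x - Real.sqrt L), Real.sq_sqrt hx, Real.sq_sqrt hL.le,
    Real.sqrt_nonneg x, Real.sqrt_nonneg L]

private lemma log_II {a : ℝ} (ha : 0 < a) : IntervalIntegrable Real.log volume 0 a := by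
  have hmaj : IntervalIntegrable (fun t : ℝ => 2 * t ^ (-(1/2) : ℝ) + t) volume 0 a :=
    ((intervalIntegral.intervalIntegrable_rpow' (by norm_num)).const_mul 2).add
      (continuous_id.intervalIntegrable 0 a)
  refine hmaj.mono_fun' Real.measurable_log.aestronglyMeasurable.restrict ?_
  rw [uIoc_of_le ha.le]
  filter_upwards [ae_restrict_mem measurableSet_Ioc] with x hx
  have hx0 : 0 < x := hx.1
  rcases le_or_gt x 1 with h1 | h1
  · have hlog : Real.log x ≤ 0 := Real.log_nonpos hx0.le h1
    have : -Real.log x ≤ 2 * x ^ (-(1/2) : ℝ) := by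
      have h2 : Real.log (x ^ (-(1/2) : ℝ)) ≤ x ^ (-(1/2) : ℝ) - 1 :=
        Real.log_le_sub_one_of_pos (Real.rpow_pos_of_pos hx0 _)
      rw [Real.log_rpow hx0] at h2
      nlinarith [Real.rpow_nonneg hx0.le (-(1/2) : ℝ)]
    simp only [Real.norm_eq_abs, abs_of_nonpos hlog]
    nlinarith
  · have hlog : 0 ≤ Real.log x := Real.log_nonneg h1.le
    simp only [Real.norm_eq_abs, abs_of_nonneg hlog]
    have := Real.log_le_sub_one_of_pos hx0
    nlinarith [Real.rpow_nonneg hx0.le (-(1/2) : ℝ)]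

/-- Dudley-type integral bound: for `a, b > 0`,
`∫₀^a √(log(1 + b/t)) dt ≤ a √(log(e(1 + b/a)))`. -/
theorem dudley_integral_bound (a b : ℝ) (ha : 0 < a) (hb : 0 < b) :
    ∫ t in (0 : ℝ)..a, Real.sqrt (Real.log (1 + b / t))
      ≤ a * Real.sqrt (Real.log (Real.exp 1 * (1 + b / a))) := by
  set L : ℝ := Real.log (Real.exp 1 * (1 + b / a)) with hLdef
  have hba : (0:ℝ) < 1 + b / a := by positivity
  have hLval : L = 1 + Real.log (1 + b / a) := by
    rw [hLdef, Real.log_mul (Real.exp_ne_zero 1) hba.ne', Real.log_exp]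
  have hL : 0 < L := by
    rw [hLval]
    have : 0 ≤ Real.log (1 + b / a) := Real.log_nonneg (by nlinarith [div_pos hb ha])
    linarith
  -- integrability of log(t+b) on [0,a]
  have h1 : IntervalIntegrable (fun t => Real.log (t + b)) volume 0 a := by
    apply IntervalIntegrable.log
    · fun_prop
    · intro x hx
      rw [uIcc_of_le ha.le] at hx
      have := hx.1
      positivity
  have h2 : IntervalIntegrable Real.log volume 0 a := log_II ha
  -- integrability of f t = log (1 + b/t) on [0,a]
  have key : EqOn (fun t => Real.log (t + b) - Real.log t)
      (fun t => Real.log (1 + b / t)) (Ioc 0 a) := by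
    intro t ht
    simp only
    have ht0 : 0 < t := ht.1
    rw [← Real.log_div (by positivity) ht0.ne']
    congr 1
    rw [add_div, div_self ht0.ne']
  have f_int : IntervalIntegrable (fun t => Real.log (1 + b / t)) volume 0 a := by
    rw [intervalIntegrable_iff_integrableOn_Ioc_of_le ha.le]
    have := (h1.sub h2).def'
    rw [uIoc_of_le ha.le] at this
    exact this.congr_fun key measurableSet_Ioc
  -- FTC: compute the integral of log(1+b/t)
  have I_eq : (∫ t in (0:ℝ)..a, Real.log (1 + b / t))
      = (a + b) * Real.log (a + b) - a * Real.log a - b * Real.log b := by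
    have hF : ∀ x ∈ Ioo (0:ℝ) a, HasDerivAt
        (fun t => (t + b) * Real.log (t + b) - t * Real.log t)
        (Real.log (1 + b / x)) x := by
      intro x hx
      have hx0 : 0 < x := hx.1
      have hxb : 0 < x + b := by positivity
      have d1 : HasDerivAt (fun t : ℝ => t + b) 1 x := (hasDerivAt_id x).add_const b
      have d2 : HasDerivAt (fun t : ℝ => Real.log (t + b)) ((x + b)⁻¹) x := by
        simpa using d1.log hxb.ne'
      have d3 : HasDerivAt (fun t : ℝ => (t + b) * Real.log (t + b))
          (1 * Real.log (x + b) + (x + b) * (x + b)⁻¹) x := d1.mul d2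
      have d4 : HasDerivAt (fun t : ℝ => t * Real.log t)
          (1 * Real.log x + x * x⁻¹) x := (hasDerivAt_id x).mul (Real.hasDerivAt_log hx0.ne')
      have heq : Real.log (1 + b / x) = Real.log (x + b) - Real.log x := by
        rw [← Real.log_div hxb.ne' hx0.ne']
        congr 1
        rw [add_div, div_self hx0.ne']
      have := d3.sub d4
      refine this.congr_deriv ?_
      rw [heq, mul_inv_cancel₀ hxb.ne', mul_inv_cancel₀ hx0.ne']
      ring
    have hcont : ContinuousOn (fun t => (t + b) * Real.log (t + b) - t * Real.log t)
        (Icc 0 a) := by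
      apply ContinuousOn.sub
      · apply ContinuousOn.mul (by fun_prop)
        apply ContinuousOn.log (by fun_prop)
        intro x hx
        have := hx.1
        positivity
      · have : Continuous (fun t : ℝ => t * Real.log t) := by
          have := Real.continuous_negMulLog
          exact Real.continuous_mul_log
        exact this.continuousOn
    rw [intervalIntegral.integral_eq_sub_of_hasDerivAt_of_le ha.le hcont hF f_int]
    norm_num
  -- the integral bound
  have I_le : (∫ t in (0:ℝ)..a, Real.log (1 + b / t)) ≤ a * L := by
    rw [I_eq, hLval]
    have hlog1 : Real.log (1 + b / a) = Real.log (a + b) - Real.log a := by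
      rw [← Real.log_div (by positivity) ha.ne']
      congr 1
      field_simp
    have hkey : Real.log (a + b) - Real.log b ≤ a / b := by
      have h := Real.log_le_sub_one_of_pos (show (0:ℝ) < (a + b)/b by positivity)
      rw [Real.log_div (by positivity) hb.ne'] at h
      have : (a + b) / b - 1 = a / b := by field_simp; ring
      linarith [this ▸ h]
    have hb' : b * (Real.log (a + b) - Real.log b) ≤ a := by
      calc b * (Real.log (a + b) - Real.log b) ≤ b * (a / b) := by
            exact mul_le_mul_of_nonneg_left hkey hb.le
        _ = a := by field_simp
    rw [hlog1]
    nlinarith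
  -- majorant g and integrability of sqrt ∘ f
  set g : ℝ → ℝ := fun t => (Real.log (1 + b / t) + L) / (2 * Real.sqrt L) with hg
  have g_int : IntervalIntegrable g volume 0 a :=
    ((f_int.add (_root_.intervalIntegrable_const (c := L))).div_const _)
  have hmeas : Measurable (fun t : ℝ => Real.sqrt (Real.log (1 + b / t))) :=
    Real.continuous_sqrt.measurable.comp (Real.measurable_log.comp
      ((measurable_const.div measurable_id).const_add 1))
  have h_int : IntervalIntegrable (fun t => Real.sqrt (Real.log (1 + b / t))) volume 0 a := by
    refine g_int.mono_fun' hmeas.aestronglyMeasurable.restrict ?_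
    rw [uIoc_of_le ha.le]
    filter_upwards [ae_restrict_mem measurableSet_Ioc] with x hx
    have hx0 : 0 < x := hx.1
    have hfx : 0 ≤ Real.log (1 + b / x) := Real.log_nonneg (by nlinarith [div_pos hb hx0])
    simp only [Real.norm_eq_abs, abs_of_nonneg (Real.sqrt_nonneg _)]
    exact sqrt_le_aux hfx hL
  -- pointwise bound on [0,a]
  have hpt : ∀ x ∈ Icc (0:ℝ) a, Real.sqrt (Real.log (1 + b / x)) ≤ g x := by
    intro x hx
    rcases eq_or_lt_of_le hx.1 with h0 | h0
    · simp only [hg, ← h0, div_zero, add_zero, Real.log_one, Real.sqrt_zero, zero_add]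
      positivity
    · have hfx : 0 ≤ Real.log (1 + b / x) := Real.log_nonneg (by nlinarith [div_pos hb h0])
      exact sqrt_le_aux hfx hL
  -- conclude
  have step1 : (∫ t in (0:ℝ)..a, Real.sqrt (Real.log (1 + b / t)))
      ≤ ∫ t in (0:ℝ)..a, g t :=
    intervalIntegral.integral_mono_on ha.le h_int g_int hpt
  have step2 : (∫ t in (0:ℝ)..a, g t)
      = ((∫ t in (0:ℝ)..a, Real.log (1 + b / t)) + a * L) / (2 * Real.sqrt L) := by
    simp only [hg]
    rw [intervalIntegral.integral_div, intervalIntegral.integral_add f_int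
      (_root_.intervalIntegrable_const (c := L)), intervalIntegral.integral_const]
    norm_num
  have step3 : ((∫ t in (0:ℝ)..a, Real.log (1 + b / t)) + a * L) / (2 * Real.sqrt L)
      ≤ (a * L + a * L) / (2 * Real.sqrt L) := by
    gcongr
  have step4 : (a * L + a * L) / (2 * Real.sqrt L) = a * Real.sqrt L := by
    have hs : (0:ℝ) < Real.sqrt L := Real.sqrt_pos.mpr hL
    rw [div_eq_iff (by positivity : (2 * Real.sqrt L) ≠ 0)]
    nlinarith [Real.mul_self_sqrt hL.le]
  calc (∫ t in (0:ℝ)..a, Real.sqrt (Real.log (1 + b / t)))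
      ≤ ∫ t in (0:ℝ)..a, g t := step1
    _ = _ := step2
    _ ≤ (a * L + a * L) / (2 * Real.sqrt L) := step3
    _ = a * Real.sqrt L := step4
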